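/- For a ∈ [1/2,1], the function D_{(a)} defined by D_{(a)}(u,v) = min(u, v, (1−a)(u+v)) if u+v ≤ 1 and D_{(a)}(u,v) = min(u, v, a(u+v)+1−2a) if u+v ≥ 1, is a 2-copula. -/
import Mathlib


open Set

/-- A 2-copula on [0,1]². -/
def IsCopula2 (C : ℝ → ℝ → ℝ) : Prop :=
  (∀ u ∈ Set.Icc (0:ℝ) 1, ∀ v ∈ Set.Icc (0:ℝ) 1, C u v ∈ Set.Icc (0:ℝ) 1) ∧
  (∀ u ∈ Set.Icc (0:ℝ) 1, C u 0 = 0 ∧ C 0 u = 0 ∧ C u 1 = u ∧ C 1 u = u) ∧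
  (∀ u ∈ Set.Icc (0:ℝ) 1, ∀ u' ∈ Set.Icc (0:ℝ) 1, ∀ v ∈ Set.Icc (0:ℝ) 1, ∀ v' ∈ Set.Icc (0:ℝ) 1,
    u ≤ u' → v ≤ v' → 0 ≤ C u' v' - C u' v - C u v' + C u v)

/-- The one-parameter family D_{(a)}. -/
noncomputable def Da (a u v : ℝ) : ℝ :=
  if u + v ≤ 1 then min u (min v ((1 - a) * (u + v)))
  else min u (min v (a * (u + v) + 1 - 2*a))

/-- The diagonal function whose graph gives the third argument of the min. -/
noncomputable def fD (a s : ℝ) : ℝ := if s ≤ 1 then (1 - a) * s else a * s + 1 - 2*a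

lemma Da_eq_min (a u v : ℝ) : Da a u v = min u (min v (fD a (u + v))) := by
  unfold Da fD
  split_ifs <;> rfl

lemma fD_slopes (a s t : ℝ) (ha1 : 1/2 ≤ a) (ha2 : a ≤ 1) (hst : s ≤ t) :
    (1 - a) * (t - s) ≤ fD a t - fD a s ∧ fD a t - fD a s ≤ a * (t - s) := by
  unfold fD
  split_ifs <;> constructor <;> nlinarith

lemma fD_convex (a s11 s12 s21 s22 : ℝ) (ha1 : 1/2 ≤ a) (ha2 : a ≤ 1)
    (h1 : s11 ≤ s12) (h2 : s12 ≤ s22) (h3 : s11 ≤ s21)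
    (hsum : s12 + s21 = s11 + s22) :
    fD a s12 + fD a s21 ≤ fD a s11 + fD a s22 := by
  unfold fD
  split_ifs <;> nlinarith

set_option maxHeartbeats 4000000 in
lemma key_min (a u u' v v' w11 w12 w21 w22 : ℝ)
    (huu : u ≤ u') (hvv : v ≤ v')
    (m1 : w11 ≤ w12) (m2 : w21 ≤ w22)
    (s1 : (1-a)*(v'-v) ≤ w12 - w11) (s2 : w12 - w11 ≤ a*(v'-v))
    (s3 : (1-a)*(v'-v) ≤ w22 - w21) (s4 : w22 - w21 ≤ a*(v'-v))
    (s5 : (1-a)*(u'-u) ≤ w21 - w11) (s6 : w21 - w11 ≤ a*(u'-u))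
    (s7 : (1-a)*(u'-u) ≤ w22 - w12) (s8 : w22 - w12 ≤ a*(u'-u))
    (cvx : w12 + w21 ≤ w11 + w22)
    (p2 : 0 ≤ (1-a)*(u'-u)) (p4 : 0 ≤ (1-a)*(v'-v))
    (p1 : 0 ≤ a*(u'-u)) (p3 : 0 ≤ a*(v'-v)) :
    0 ≤ min u' (min v' w22) - min u' (min v w21) - min u (min v' w12) + min u (min v w11) := by
  rcases min_cases u' (min v' w22) with ⟨e22, h22⟩ | ⟨e22, h22⟩ <;>
  rcases min_cases v' w22 with ⟨f22, g22⟩ | ⟨f22, g22⟩ <;>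
  rcases min_cases u' (min v w21) with ⟨e21, h21⟩ | ⟨e21, h21⟩ <;>
  rcases min_cases v w21 with ⟨f21, g21⟩ | ⟨f21, g21⟩ <;>
  rcases min_cases u (min v' w12) with ⟨e12, h12⟩ | ⟨e12, h12⟩ <;>
  rcases min_cases v' w12 with ⟨f12, g12⟩ | ⟨f12, g12⟩ <;>
  rcases min_cases u (min v w11) with ⟨e11, h11⟩ | ⟨e11, h11⟩ <;>
  rcases min_cases v w11 with ⟨f11, g11⟩ | ⟨f11, g11⟩ <;>
  simp only [e22, e21, e12, e11, f22, f21, f12, f11] at * <;>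
  linarith

lemma Da_rect (a u u' v v' : ℝ) (ha1 : 1/2 ≤ a) (ha2 : a ≤ 1)
    (huu : u ≤ u') (hvv : v ≤ v') :
    0 ≤ Da a u' v' - Da a u' v - Da a u v' + Da a u v := by
  rw [Da_eq_min, Da_eq_min, Da_eq_min, Da_eq_min]
  have S1 := fD_slopes a (u + v) (u + v') ha1 ha2 (by linarith)
  have S2 := fD_slopes a (u' + v) (u' + v') ha1 ha2 (by linarith)
  have S3 := fD_slopes a (u + v) (u' + v) ha1 ha2 (by linarith)
  have S4 := fD_slopes a (u + v') (u' + v') ha1 ha2 (by linarith)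
  have C := fD_convex a (u + v) (u + v') (u' + v) (u' + v') ha1 ha2
    (by linarith) (by linarith) (by linarith) (by ring)
  have p1 : 0 ≤ a * (u' - u) := mul_nonneg (by linarith) (by linarith)
  have p2 : 0 ≤ (1 - a) * (u' - u) := mul_nonneg (by linarith) (by linarith)
  have p3 : 0 ≤ a * (v' - v) := mul_nonneg (by linarith) (by linarith)
  have p4 : 0 ≤ (1 - a) * (v' - v) := mul_nonneg (by linarith) (by linarith)
  have := key_min a u u' v v' (fD a (u + v)) (fD a (u + v')) (fD a (u' + v)) (fD a (u' + v'))
    huu hvv (by linarith [S1.1]) (by linarith [S4.1])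
    (by linarith [S1.1]) (by linarith [S1.2])
    (by linarith [S4.1]) (by linarith [S4.2])
    (by linarith [S3.1]) (by linarith [S3.2])
    (by linarith [S2.1]) (by linarith [S2.2])
    (by linarith [C]) p2 p4 p1 p3
  linarith [this]

lemma fD_nonneg (a s : ℝ) (ha1 : 1/2 ≤ a) (ha2 : a ≤ 1) (hs : 0 ≤ s) : 0 ≤ fD a s := by
  unfold fD; split_ifs <;> nlinarith

/-- For a ∈ [1/2,1], the function D_{(a)} is a 2-copula. -/
theorem Da_isCopula2 (a : ℝ) (ha : a ∈ Icc (1/2 : ℝ) 1) : IsCopula2 (Da a) := by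
  obtain ⟨ha1, ha2⟩ := ha
  refine ⟨?_, ?_, ?_⟩
  · rintro u ⟨hu0, hu1⟩ v ⟨hv0, hv1⟩
    rw [Da_eq_min]
    constructor
    · exact le_min hu0 (le_min hv0 (fD_nonneg a (u + v) ha1 ha2 (by linarith)))
    · exact le_trans (min_le_left _ _) hu1
  · rintro u ⟨hu0, hu1⟩
    refine ⟨?_, ?_, ?_, ?_⟩
    · rw [Da_eq_min]
      have h : fD a (u + 0) = (1 - a) * u := by
        unfold fD; rw [if_pos (by linarith)]; ring
      rw [h]
      have : min (0:ℝ) ((1 - a) * u) = 0 := min_eq_left (mul_nonneg (by linarith) hu0)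
      rw [this, min_eq_right hu0]
    · rw [Da_eq_min]
      have h : fD a (0 + u) = (1 - a) * u := by
        unfold fD; rw [if_pos (by linarith)]; ring
      rw [h]
      exact min_eq_left (le_min hu0 (mul_nonneg (by linarith) hu0))
    · rw [Da_eq_min]
      have h : u ≤ fD a (u + 1) := by
        unfold fD; split_ifs <;> nlinarith
      rw [min_eq_left (le_min hu1 h)]
    · rw [Da_eq_min]
      have h : u ≤ fD a (1 + u) := by
        unfold fD; split_ifs <;> nlinarith
      rw [min_eq_left h, min_eq_right hu1]
  · rintro u ⟨hu0, hu1⟩ u' ⟨hu'0, hu'1⟩ v ⟨hv0, hv1⟩ v' ⟨hv'0, hv'1⟩ huu hvv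
    exact Da_rect a u u' v v' ha1 ha2 huu hvv
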